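/- Let $M$ be the standard Gaussian density on $\mathbb{R}^n$, $h \in \mathbb{R}^n$, and $f$ measurable. Then for every $\rho > 0$, $\int (\cosh(\rho f(x-h)) - 1) M(x)\,dx \le \frac{1}{\sqrt{2}} e^{|h|^2/2} \left(\int (\cosh(2\rho f(z)) - 1) M(z)\,dz\right)^{1/2}$. -/

import Mathlib

open MeasureTheory Real Filter Topology
open scoped ENNReal RealInnerProductSpace

noncomputable def gaussM (n : ℕ) (x : EuclideanSpace ℝ (Fin n)) : ℝ :=
  (2 * π) ^ (-(n : ℝ) / 2) * Real.exp (-‖x‖ ^ 2 / 2)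

noncomputable def orliczInt (n : ℕ) (ρ : ℝ) (f : EuclideanSpace ℝ (Fin n) → ℝ) : ℝ≥0∞ :=
  ∫⁻ x, ENNReal.ofReal (Real.cosh (ρ * f x) - 1) * ENNReal.ofReal (gaussM n x)

def MemLexp (n : ℕ) (f : EuclideanSpace ℝ (Fin n) → ℝ) : Prop :=
  ∃ ρ > 0, orliczInt n ρ f < ⊤

noncomputable def luxNorm (n : ℕ) (f : EuclideanSpace ℝ (Fin n) → ℝ) : ℝ :=
  sInf {c : ℝ | 0 < c ∧ orliczInt n (1 / c) f ≤ 1}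

noncomputable def coshStar (y : ℝ) : ℝ := ⨆ u : ℝ, (u * y - (Real.cosh u - 1))

lemma gaussM_nonneg (n : ℕ) (x : EuclideanSpace ℝ (Fin n)) : 0 ≤ gaussM n x := by
  unfold gaussM; positivity

lemma gaussM_add (n : ℕ) (h z : EuclideanSpace ℝ (Fin n)) :
    gaussM n (z + h) = Real.exp (-⟪h, z⟫ - ‖h‖ ^ 2 / 2) * gaussM n z := by
  unfold gaussM
  have key : -‖z + h‖ ^ 2 / 2 = (-⟪h, z⟫ - ‖h‖ ^ 2 / 2) + (-‖z‖ ^ 2 / 2) := by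
    rw [norm_add_sq_real, real_inner_comm z h]; ring
  rw [key, Real.exp_add]; ring

lemma gaussM_lintegral (n : ℕ) : ∫⁻ z, ENNReal.ofReal (gaussM n z) = 1 := by
  have hint : Integrable (fun z : EuclideanSpace ℝ (Fin n) => Real.exp (-(1/2) * ‖z‖ ^ 2)) := by
    have := (GaussianFourier.integrable_cexp_neg_mul_sq_norm_add (V := EuclideanSpace ℝ (Fin n))
      (b := (1/2 : ℂ)) (by norm_num) 0 0).norm
    convert this using 2 with z
    rw [Complex.norm_exp]
    norm_num
    simp [← Complex.ofReal_pow]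
  have hg : Integrable (fun z : EuclideanSpace ℝ (Fin n) => gaussM n z) := by
    unfold gaussM
    have : (fun z : EuclideanSpace ℝ (Fin n) => (2 * π) ^ (-(n : ℝ) / 2) * Real.exp (-‖z‖ ^ 2 / 2))
        = fun z => (2 * π) ^ (-(n : ℝ) / 2) * Real.exp (-(1/2) * ‖z‖ ^ 2) := by
      funext z; ring_nf
    rw [this]
    exact hint.const_mul _
  rw [← ofReal_integral_eq_lintegral_ofReal hg (Filter.Eventually.of_forall (gaussM_nonneg n))]
  have hval : ∫ z : EuclideanSpace ℝ (Fin n), gaussM n z = 1 := by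
    unfold gaussM
    rw [integral_const_mul]
    have he : (fun z : EuclideanSpace ℝ (Fin n) => Real.exp (-‖z‖ ^ 2 / 2))
        = fun z => Real.exp (-(1/2) * ‖z‖ ^ 2) := by funext z; ring_nf
    rw [he, GaussianFourier.integral_rexp_neg_mul_sq_norm (by norm_num : (0:ℝ) < 1/2)]
    rw [finrank_euclideanSpace_fin]
    have : (π / (1/2 : ℝ)) = 2 * π := by ring
    rw [this, ← Real.rpow_add (by positivity), neg_div, neg_add_cancel, Real.rpow_zero]
  rw [hval, ENNReal.ofReal_one]

lemma cs_lemma {α : Type*} [MeasurableSpace α] (μ : Measure α) (g : α → ℝ≥0∞)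
    {w : α → ℝ≥0∞} (hw : Measurable w) (hw' : ∀ x, w x ≠ ⊤) :
    ∫⁻ x, g x * w x ∂μ ≤
      (∫⁻ x, g x ^ (2 : ℝ) ∂μ) ^ ((1 : ℝ) / 2) * (∫⁻ x, w x ^ (2 : ℝ) ∂μ) ^ ((1 : ℝ) / 2) := by
  obtain ⟨m, hm, hle, heq⟩ := exists_measurable_le_lintegral_eq μ (fun x => g x * w x)
  rw [heq]
  have hpq : Real.HolderConjugate 2 2 := Real.HolderConjugate.two_two
  have h1 : ∀ x, m x ≤ (fun x => m x / w x) x * w x := by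
    intro x
    rcases eq_or_ne (w x) 0 with h0 | h0
    · have : m x ≤ 0 := by simpa [h0] using hle x
      simp [le_antisymm this zero_le]
    · simp only
      rw [ENNReal.div_mul_cancel h0 (hw' x)]
  have h2 : ∀ x, m x / w x ≤ g x := by
    intro x
    rcases eq_or_ne (w x) 0 with h0 | h0
    · have : m x = 0 := le_antisymm (by simpa [h0] using hle x) zero_le
      simp [this]
    · exact (ENNReal.div_le_iff h0 (hw' x)).2 (hle x)
  calc ∫⁻ x, m x ∂μ ≤ ∫⁻ x, ((fun x => m x / w x) * w) x ∂μ :=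
        lintegral_mono fun x => h1 x
    _ ≤ (∫⁻ x, (m x / w x) ^ (2 : ℝ) ∂μ) ^ ((1 : ℝ) / 2) *
          (∫⁻ x, w x ^ (2 : ℝ) ∂μ) ^ ((1 : ℝ) / 2) :=
        ENNReal.lintegral_mul_le_Lp_mul_Lq μ hpq (hm.div hw).aemeasurable hw.aemeasurable
    _ ≤ (∫⁻ x, g x ^ (2 : ℝ) ∂μ) ^ ((1 : ℝ) / 2) * (∫⁻ x, w x ^ (2 : ℝ) ∂μ) ^ ((1 : ℝ) / 2) := by
        exact mul_le_mul_left
          (ENNReal.rpow_le_rpow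
            (lintegral_mono fun x => ENNReal.rpow_le_rpow (h2 x) (by norm_num)) (by norm_num)) _

lemma cosh_sq_ineq (u : ℝ) : (Real.cosh u - 1) ^ 2 ≤ (Real.cosh (2 * u) - 1) / 2 := by
  have h1 := Real.one_le_cosh u
  rw [Real.cosh_two_mul]
  nlinarith [h1, Real.sinh_sq u]

theorem translation_orlicz_estimate (n : ℕ) (h : EuclideanSpace ℝ (Fin n))
    (f : EuclideanSpace ℝ (Fin n) → ℝ) (ρ : ℝ) (hρ : 0 < ρ) :
    (∫⁻ x, ENNReal.ofReal (Real.cosh (ρ * f (x - h)) - 1) * ENNReal.ofReal (gaussM n x)) ≤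
      ENNReal.ofReal (Real.exp (‖h‖ ^ 2 / 2) / Real.sqrt 2) *
        (∫⁻ z, ENNReal.ofReal (Real.cosh (2 * ρ * f z) - 1) *
          ENNReal.ofReal (gaussM n z)) ^ ((1 : ℝ) / 2) := by
  set I : ℝ≥0∞ := ∫⁻ z, ENNReal.ofReal (Real.cosh (2 * ρ * f z) - 1) *
    ENNReal.ofReal (gaussM n z) with hI
  have coshnn : ∀ u : ℝ, 0 ≤ Real.cosh u - 1 := fun u => by
    have := Real.one_le_cosh u; linarith
  -- step 1 : translation
  have step1 : (∫⁻ x, ENNReal.ofReal (Real.cosh (ρ * f (x - h)) - 1) * ENNReal.ofReal (gaussM n x))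
      = ∫⁻ z, ENNReal.ofReal (Real.cosh (ρ * f z) - 1) * ENNReal.ofReal (gaussM n (z + h)) := by
    rw [← lintegral_add_right_eq_self
      (fun x => ENNReal.ofReal (Real.cosh (ρ * f (x - h)) - 1) * ENNReal.ofReal (gaussM n x)) h]
    simp only [add_sub_cancel_right]
  rw [step1]
  set g : EuclideanSpace ℝ (Fin n) → ℝ≥0∞ :=
    fun z => ENNReal.ofReal ((Real.cosh (ρ * f z) - 1) * Real.sqrt (gaussM n z)) with hg
  set w : EuclideanSpace ℝ (Fin n) → ℝ≥0∞ :=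
    fun z => ENNReal.ofReal (Real.exp (-⟪h, z⟫ - ‖h‖ ^ 2 / 2) * Real.sqrt (gaussM n z)) with hw
  have hwc : Continuous fun z : EuclideanSpace ℝ (Fin n) =>
      Real.exp (-⟪h, z⟫ - ‖h‖ ^ 2 / 2) * Real.sqrt (gaussM n z) := by
    apply Continuous.mul
    · exact (Continuous.neg (continuous_const.inner continuous_id)).sub continuous_const
        |>.rexp
    · apply Real.continuous_sqrt.comp
      unfold gaussM
      fun_prop
  have hwmeas : Measurable w := (ENNReal.measurable_ofReal.comp hwc.measurable)
  have hwfin : ∀ z, w z ≠ ⊤ := fun z => ENNReal.ofReal_ne_top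
  have point : ∀ z, ENNReal.ofReal (Real.cosh (ρ * f z) - 1) * ENNReal.ofReal (gaussM n (z + h))
      = g z * w z := by
    intro z
    rw [hg, hw]
    simp only
    rw [← ENNReal.ofReal_mul (coshnn _), ← ENNReal.ofReal_mul
      (mul_nonneg (coshnn _) (Real.sqrt_nonneg _))]
    congr 1
    rw [gaussM_add]
    have hs : Real.sqrt (gaussM n z) * Real.sqrt (gaussM n z) = gaussM n z :=
      Real.mul_self_sqrt (gaussM_nonneg n z)
    linear_combination (-((Real.cosh (ρ * f z) - 1) * Real.exp (-⟪h, z⟫ - ‖h‖ ^ 2 / 2))) * hs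
  calc (∫⁻ z, ENNReal.ofReal (Real.cosh (ρ * f z) - 1) * ENNReal.ofReal (gaussM n (z + h)))
      = ∫⁻ z, g z * w z := by simp_rw [point]
    _ ≤ (∫⁻ z, g z ^ (2 : ℝ)) ^ ((1 : ℝ) / 2) * (∫⁻ z, w z ^ (2 : ℝ)) ^ ((1 : ℝ) / 2) :=
        cs_lemma _ _ hwmeas hwfin
    _ ≤ (ENNReal.ofReal (1 / 2) * I) ^ ((1 : ℝ) / 2) *
          (ENNReal.ofReal (Real.exp (‖h‖ ^ 2))) ^ ((1 : ℝ) / 2) := by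
        apply mul_le_mul'
        · apply ENNReal.rpow_le_rpow _ (by norm_num)
          -- bound on ∫ g^2
          have hgsq : ∀ z, g z ^ (2 : ℝ) ≤ ENNReal.ofReal (1 / 2) *
              (ENNReal.ofReal (Real.cosh (2 * ρ * f z) - 1) * ENNReal.ofReal (gaussM n z)) := by
            intro z
            rw [hg]
            simp only
            rw [ENNReal.ofReal_rpow_of_nonneg
              (mul_nonneg (coshnn _) (Real.sqrt_nonneg _)) (by norm_num)]
            rw [← ENNReal.ofReal_mul (coshnn _), ← ENNReal.ofReal_mul (by norm_num)]
            apply ENNReal.ofReal_le_ofReal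
            rw [Real.rpow_two, mul_pow, Real.sq_sqrt (gaussM_nonneg n z)]
            have hcs := cosh_sq_ineq (ρ * f z)
            have h2u : 2 * (ρ * f z) = 2 * ρ * f z := by ring
            rw [h2u] at hcs
            nlinarith [gaussM_nonneg n z, sq_nonneg (Real.cosh (ρ * f z) - 1)]
          calc (∫⁻ z, g z ^ (2 : ℝ)) ≤ ∫⁻ z, ENNReal.ofReal (1 / 2) *
                (ENNReal.ofReal (Real.cosh (2 * ρ * f z) - 1) * ENNReal.ofReal (gaussM n z)) :=
              lintegral_mono fun z => hgsq z
            _ = ENNReal.ofReal (1 / 2) * I := lintegral_const_mul' _ _ ENNReal.ofReal_ne_top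
        · apply ENNReal.rpow_le_rpow _ (by norm_num)
          -- ∫ w^2 = e^{|h|^2}
          have hwsq : ∀ z, w z ^ (2 : ℝ) = ENNReal.ofReal (Real.exp (‖h‖ ^ 2)) *
              ENNReal.ofReal (gaussM n (z + (h + h))) := by
            intro z
            rw [hw]
            simp only
            rw [ENNReal.ofReal_rpow_of_nonneg
              (mul_nonneg (Real.exp_pos _).le (Real.sqrt_nonneg _)) (by norm_num)]
            rw [← ENNReal.ofReal_mul (Real.exp_pos _).le]
            congr 1
            rw [Real.rpow_two, mul_pow, Real.sq_sqrt (gaussM_nonneg n z)]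
            rw [gaussM_add]
            have hin : ⟪h + h, z⟫ = ⟪h, z⟫ + ⟪h, z⟫ := inner_add_left h h z
            have hn : ‖h + h‖ ^ 2 = 4 * ‖h‖ ^ 2 := by
              rw [← two_smul ℝ h, norm_smul]
              simp [Real.norm_ofNat]
              ring
            rw [hin, hn, sq, ← Real.exp_add, ← mul_assoc, ← Real.exp_add]
            congr 2
            ring
          simp_rw [hwsq]
          rw [lintegral_const_mul' _ _ ENNReal.ofReal_ne_top,
            lintegral_add_right_eq_self (fun z => ENNReal.ofReal (gaussM n z)) (h + h),
            gaussM_lintegral, mul_one]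
    _ = ENNReal.ofReal (Real.exp (‖h‖ ^ 2 / 2) / Real.sqrt 2) * I ^ ((1 : ℝ) / 2) := by
        have c1 : (ENNReal.ofReal ((1 : ℝ) / 2)) ^ ((1 : ℝ) / 2)
            = ENNReal.ofReal ((Real.sqrt 2)⁻¹) := by
          rw [ENNReal.ofReal_rpow_of_nonneg (by norm_num) (by norm_num), ← Real.sqrt_eq_rpow,
            show (1 / 2 : ℝ) = 2⁻¹ by norm_num, Real.sqrt_inv]
        have c2 : (ENNReal.ofReal (Real.exp (‖h‖ ^ 2))) ^ ((1 : ℝ) / 2)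
            = ENNReal.ofReal (Real.exp (‖h‖ ^ 2 / 2)) := by
          rw [ENNReal.ofReal_rpow_of_nonneg (Real.exp_pos _).le (by norm_num),
            Real.rpow_def_of_pos (Real.exp_pos _), Real.log_exp,
            show ‖h‖ ^ 2 * (1 / 2) = ‖h‖ ^ 2 / 2 by ring]
        have c3 : ENNReal.ofReal (Real.exp (‖h‖ ^ 2 / 2) / Real.sqrt 2)
            = ENNReal.ofReal (Real.exp (‖h‖ ^ 2 / 2)) * ENNReal.ofReal ((Real.sqrt 2)⁻¹) := by
          rw [div_eq_mul_inv, ENNReal.ofReal_mul (Real.exp_pos _).le]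
        rw [ENNReal.mul_rpow_of_nonneg _ _ (by norm_num), c1, c2, c3]
        ring
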